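/- Chordal metric perturbation bound for a generalized eigenvalue: let t, r, t̃, r̃ ∈ ℂ with |t̃ - t| ≤ τ and |r̃ - r| ≤ ρ, and suppose |t|² + |r|² - 2(|t|τ + |r|ρ) > 0. Then the chordal distance 𝒳(⟨t,r⟩, ⟨t̃,r̃⟩) = |t r̃ - r t̃| / (√(|t|²+|r|²) √(|t̃|²+|r̃|²)) satisfies 𝒳(⟨t,r⟩, ⟨t̃,r̃⟩) ≤ (|t|ρ + |r|τ) / (√(|t|²+|r|²) √(|t|²+|r|² - 2(|t|τ + |r|ρ))). -/

import Mathlib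

theorem stmt12 (t r t' r' : ℂ) (τ ρ : ℝ)
    (h0 : (t, r) ≠ (0, 0)) (h0' : (t', r') ≠ (0, 0))
    (ht : ‖t' - t‖ ≤ τ) (hr : ‖r' - r‖ ≤ ρ)
    (hpos : ‖t‖ ^ 2 + ‖r‖ ^ 2 -
      2 * (‖t‖ * τ + ‖r‖ * ρ) > 0) :
    ‖t * r' - r * t'‖ /
        (Real.sqrt (‖t‖ ^ 2 + ‖r‖ ^ 2) *
          Real.sqrt (‖t'‖ ^ 2 + ‖r'‖ ^ 2)) ≤
      (‖t‖ * ρ + ‖r‖ * τ) /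
        (Real.sqrt (‖t‖ ^ 2 + ‖r‖ ^ 2) *
          Real.sqrt (‖t‖ ^ 2 + ‖r‖ ^ 2 -
            2 * (‖t‖ * τ + ‖r‖ * ρ))) := by
  have τ0 : 0 ≤ τ := le_trans (norm_nonneg _) ht
  have ρ0 : 0 ≤ ρ := le_trans (norm_nonneg _) hr
  have hnum : ‖t * r' - r * t'‖ ≤ ‖t‖ * ρ + ‖r‖ * τ := by
    have : t * r' - r * t' = t * (r' - r) - r * (t' - t) := by ring
    rw [this]
    calc ‖t * (r' - r) - r * (t' - t)‖
        ≤ ‖t * (r' - r)‖ + ‖r * (t' - t)‖ :=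
          norm_sub_le _ _
      _ = ‖t‖ * ‖r' - r‖ + ‖r‖ * ‖t' - t‖ := by
          simp [map_mul]
      _ ≤ ‖t‖ * ρ + ‖r‖ * τ := by
          gcongr <;> exact norm_nonneg _
  have h1 : ‖t‖ - τ ≤ ‖t'‖ := by
    have := norm_sub_norm_le t t'
    have h2 : ‖t - t'‖ = ‖t' - t‖ := by rw [norm_sub_rev]
    linarith
  have h2 : ‖r‖ - ρ ≤ ‖r'‖ := by
    have := norm_sub_norm_le r r'
    have h2 : ‖r - r'‖ = ‖r' - r‖ := by rw [norm_sub_rev]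
    linarith
  have key : ∀ a b c : ℝ, 0 ≤ a → 0 ≤ b → 0 ≤ c → a - c ≤ b → a ^ 2 - 2 * (a * c) ≤ b ^ 2 := by
    intro a b c ha hb hc h
    rcases le_or_gt c a with h' | h'
    · nlinarith [sq_nonneg c]
    · nlinarith
  have hD : ‖t‖ ^ 2 + ‖r‖ ^ 2 -
      2 * (‖t‖ * τ + ‖r‖ * ρ) ≤
      ‖t'‖ ^ 2 + ‖r'‖ ^ 2 := by
    have k1 := key (‖t‖) (‖t'‖) τ (norm_nonneg t)
      (norm_nonneg t') τ0 h1
    have k2 := key (‖r‖) (‖r'‖) ρ (norm_nonneg r)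
      (norm_nonneg r') ρ0 h2
    linarith
  have hA : 0 < Real.sqrt (‖t‖ ^ 2 + ‖r‖ ^ 2) := by
    apply Real.sqrt_pos.mpr
    nlinarith [mul_nonneg (norm_nonneg t) τ0, mul_nonneg (norm_nonneg r) ρ0]
  have hBpos : 0 < Real.sqrt (‖t‖ ^ 2 + ‖r‖ ^ 2 -
      2 * (‖t‖ * τ + ‖r‖ * ρ)) := Real.sqrt_pos.mpr hpos
  apply div_le_div₀
  · positivity
  · exact hnum
  · positivity
  · exact mul_le_mul_of_nonneg_left (Real.sqrt_le_sqrt hD) hA.le
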